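/- Define G(a,b) for 0 < a < b with b > m > a or other configurations as in the model. Then G(a,a) = κ > 0 and lim_{b→∞} G(a,b) = -∞, provided λ < r - g + α/κ. -/

import Mathlib

open Real Filter

/-- The function G from the legislative body's free-boundary problem. -/
noncomputable def G (r g lam α κ m θ₁ θ₂ a b : ℝ) : ℝ :=
  ((θ₁ - 1) * (b / a) ^ (1 - θ₂) + (1 - θ₂) * (b / a) ^ (1 - θ₁)) *
    (κ / (θ₁ - θ₂) - (if m ≤ b then α else 0) / ((θ₁ - θ₂) * (lam - (r - g))))
  + (α / ((θ₁ - θ₂) * (lam - (r - g)))) *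
      ((1 - θ₂) * (m / a) ^ (1 - θ₁) + (θ₁ - 1) * (m / a) ^ (1 - θ₂)) *
      (if a < m ∧ m < b then 1 else 0)
  + (α / (lam - (r - g))) * (if m ≤ a then 1 else 0)

/-- G(a,a) = κ > 0 and lim_{b→∞} G(a,b) = -∞, provided
r-g < λ < r-g + α/κ. -/
theorem stmt_7 (σ r g lam α κ m θ₁ θ₂ a : ℝ) (hσ : 0 < σ)
    (hα : 0 < α) (hκ : 0 < κ) (hm : 0 < m) (ha : 0 < a)
    (hlam₁ : r - g < lam) (hlam₂ : lam < r - g + α / κ)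
    (hθ₁ : θ₁ > 1) (hθ₂ : θ₂ < 0)
    (hroot₁ : (1/2) * σ ^ 2 * θ₁ * (θ₁ - 1) + (r - g) * θ₁ - lam = 0)
    (hroot₂ : (1/2) * σ ^ 2 * θ₂ * (θ₂ - 1) + (r - g) * θ₂ - lam = 0) :
    G r g lam α κ m θ₁ θ₂ a a = κ ∧ 0 < κ ∧
    Tendsto (fun b => G r g lam α κ m θ₁ θ₂ a b) atTop atBot := by
  have ha' : a ≠ 0 := ha.ne'
  have hθ : (0:ℝ) < θ₁ - θ₂ := by linarith
  have hl : (0:ℝ) < lam - (r - g) := by linarith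
  refine ⟨?_, hκ, ?_⟩
  · unfold G
    rw [div_self ha', Real.one_rpow, Real.one_rpow]
    have h2 : ¬ (a < m ∧ m < a) := by rintro ⟨h1, h2⟩; linarith
    simp only [h2, if_false, mul_zero, add_zero]
    by_cases hma : m ≤ a <;> simp only [hma, if_true, if_false] <;> field_simp <;> ring
  · have hC : κ / (θ₁ - θ₂) - α / ((θ₁ - θ₂) * (lam - (r - g))) < 0 := by
      rw [sub_neg, div_lt_div_iff₀ hθ (by positivity)]
      have hk : (lam - (r - g)) * κ < α := (lt_div_iff₀ hκ).mp (by linarith)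
      nlinarith
    set C := κ / (θ₁ - θ₂) - α / ((θ₁ - θ₂) * (lam - (r - g))) with hCdef
    set D := (α / ((θ₁ - θ₂) * (lam - (r - g)))) *
        ((1 - θ₂) * (m / a) ^ (1 - θ₁) + (θ₁ - 1) * (m / a) ^ (1 - θ₂)) *
        (if a < m then 1 else 0)
      + (α / (lam - (r - g))) * (if m ≤ a then 1 else 0) with hDdef
    have h1 : Tendsto (fun b : ℝ => b / a) atTop atTop := tendsto_id.atTop_div_const ha
    have h2 : Tendsto (fun b : ℝ => (b / a) ^ (1 - θ₂)) atTop atTop :=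
      (tendsto_rpow_atTop (by linarith)).comp h1
    have h3 : Tendsto (fun b : ℝ => (b / a) ^ (1 - θ₁)) atTop (nhds 0) := by
      have := (tendsto_rpow_neg_atTop (by linarith : 0 < θ₁ - 1)).comp h1
      simpa [neg_sub, Function.comp_def] using this
    have h4 : Tendsto (fun b : ℝ => (θ₁ - 1) * (b / a) ^ (1 - θ₂) +
        (1 - θ₂) * (b / a) ^ (1 - θ₁)) atTop atTop := by
      refine tendsto_atTop_add_right_of_le' _ (-1)
        (h2.const_mul_atTop (by linarith : (0:ℝ) < θ₁ - 1)) ?_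
      exact (h3.const_mul (1 - θ₂)).eventually
        (eventually_ge_nhds (by norm_num : (-1:ℝ) < (1 - θ₂) * 0))
    have h5 : Tendsto (fun b : ℝ => ((θ₁ - 1) * (b / a) ^ (1 - θ₂) +
        (1 - θ₂) * (b / a) ^ (1 - θ₁)) * C + D) atTop atBot :=
      tendsto_atBot_add_const_right _ D (h4.atTop_mul_const_of_neg hC)
    refine h5.congr' ?_
    filter_upwards [eventually_gt_atTop m] with b hb
    unfold G
    rw [if_pos hb.le]
    by_cases ham : a < m
    · rw [if_pos ⟨ham, hb⟩, hDdef, if_pos ham, hCdef]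
      ring
    · rw [if_neg (fun h => ham h.1), hDdef, if_neg ham, hCdef]
      ring
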